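/- Consider the networked SAIR(S) model with δ_i = 0 for all i, symmetric nonnegative adjacency matrix W, positive diagonal matrices B = diag(β_i), K = diag(κ_i), Γ = diag(γ_i), Σ = diag(σ_i), and q ∈ [0,1]. If the 2n×2n block matrix [[qW, (1/2)W], [(1/2)W, (1−q)W]] is strictly less than [[B⁻¹(Σ+K), −(1/2)B⁻¹Σ], [−(1/2)B⁻¹Σ, B⁻¹Γ]] in the positive-definite (Loewner) order, then for every solution with initial condition in the simplex (all components in [0,1] and s_i(0)+a_i(0)+p_i(0)+r_i(0) = 1 for all i), a_i(t) → 0 and p_i(t) → 0 as t → ∞ for all i. -/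

import Mathlib

set_option maxHeartbeats 1000000


open Matrix Filter
open Set Real


noncomputable def np (x : ℝ) : ℝ := max (-x) 0

lemma np_nonneg (x : ℝ) : 0 ≤ np x := le_max_right _ _

lemma neg_np_le (x : ℝ) : -np x ≤ x := by
  unfold np; rcases le_total x 0 with h | h
  · rw [max_eq_left (by linarith)]; linarith
  · rw [max_eq_right (by linarith)]; linarith

lemma np_le {x g : ℝ} (h : -g ≤ x) (hg : 0 ≤ g) : np x ≤ g := max_le (by linarith) hg

lemma abs_eq_add_np (x : ℝ) : |x| = x + 2 * np x := by
  unfold np; rcases le_total x 0 with h | h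
  · rw [abs_of_nonpos h, max_eq_left (by linarith)]; ring
  · rw [abs_of_nonneg h, max_eq_right (by linarith)]; ring

lemma np_add_le (x y : ℝ) : np (x + y) ≤ np x + np y := by
  unfold np
  rcases le_total (x + y) 0 with h | h
  · rw [max_eq_left (a := -(x+y)) (by linarith)]
    have := le_max_left (-x) 0; have := le_max_left (-y) 0; linarith
  · rw [max_eq_right (b := (0:ℝ)) (by linarith)]
    have := le_max_right (-x) 0; have := le_max_right (-y) 0; linarith

lemma mul_nonneg_of_nonpos_nonpos {u v : ℝ} (h : u ≤ 0) (h' : v ≤ 0) : 0 ≤ u * v := by nlinarith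

lemma mul_lower {u v M : ℝ} (hu : |u| ≤ M) (hv : |v| ≤ M) : -(M * (np u + np v)) ≤ u * v := by
  have hu1 := abs_le.mp hu; have hv1 := abs_le.mp hv
  have hM : 0 ≤ M := le_trans (abs_nonneg u) hu
  rcases le_total u 0 with h | h <;> rcases le_total v 0 with h' | h'
  · have huv : 0 ≤ u * v := mul_nonneg_of_nonpos_nonpos h h'
    nlinarith [mul_nonneg hM (np_nonneg u), mul_nonneg hM (np_nonneg v)]
  · have h1 : np u = -u := max_eq_left (by linarith)
    rw [h1]; have := np_nonneg v; nlinarith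
  · have h1 : np v = -v := max_eq_left (by linarith)
    rw [h1]; have := np_nonneg u; nlinarith
  · have := np_nonneg u; have := np_nonneg v
    nlinarith [mul_nonneg h h', mul_nonneg hM (np_nonneg u), mul_nonneg hM (np_nonneg v)]

lemma lin_lower {c K x g : ℝ} (hc : 0 ≤ c) (hcK : c ≤ K) (hx : np x ≤ g) (hg : 0 ≤ g) :
    -(K * x) - 2 * (K * g) ≤ -(c * x) := by
  have hxg : -g ≤ x := le_trans (neg_le_neg hx) (neg_np_le x)
  have hK : 0 ≤ K := le_trans hc hcK
  rcases le_total 0 x with h | h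
  · nlinarith
  · nlinarith

lemma mono_of_deriv {f f' : ℝ → ℝ} {T : ℝ}
    (hc : ContinuousOn f (Icc 0 T))
    (hd : ∀ t ∈ Ioo (0:ℝ) T, HasDerivAt f (f' t) t)
    (h0 : ∀ t ∈ Ioo (0:ℝ) T, 0 ≤ f' t) :
    ∀ t ∈ Icc (0:ℝ) T, f 0 ≤ f t := by
  intro t ht
  have hmono : MonotoneOn f (Icc 0 T) := by
    apply monotoneOn_of_deriv_nonneg (convex_Icc 0 T) hc
    · intro x hx; rw [interior_Icc] at hx
      exact (hd x hx).differentiableAt.differentiableWithinAt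
    · intro x hx; rw [interior_Icc] at hx
      rw [(hd x hx).deriv]; exact h0 x hx
  exact hmono (left_mem_Icc.mpr (ht.1.trans ht.2)) ht ht.1

lemma exp_hasDerivAt (K t : ℝ) : HasDerivAt (fun u : ℝ => exp (K * u)) (K * exp (K * t)) t := by
  have h1 : HasDerivAt (fun u : ℝ => K * u) K t := (hasDerivAt_id t).const_mul K |>.congr_deriv (mul_one K)
  have := (Real.hasDerivAt_exp (K * t)).comp t h1
  simpa [mul_comm, Function.comp_def] using this

lemma orthant_step {x Dx g G : ℝ → ℝ} {T K K' : ℝ}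
    (hK : 0 ≤ K) (hK' : 0 ≤ K')
    (hx0 : 0 ≤ x 0)
    (hxc : ContinuousOn x (Icc 0 T))
    (hxd : ∀ t ∈ Ioo (0:ℝ) T, HasDerivAt x (Dx t) t)
    (hGd : ∀ t : ℝ, HasDerivAt G (g t) t) (hG0 : G 0 = 0)
    (hGnn : ∀ t ∈ Icc (0:ℝ) T, 0 ≤ G t)
    (hb : ∀ t ∈ Ioo (0:ℝ) T, -(K * x t) - K' * g t ≤ Dx t) :
    ∀ t ∈ Icc (0:ℝ) T, -(K' * G t) ≤ x t := by
  have hGc : Continuous G := continuous_iff_continuousAt.mpr fun t => (hGd t).continuousAt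
  set ψ : ℝ → ℝ := fun t => exp (K * t) * (x t + K' * G t) with hψ
  have hψc : ContinuousOn ψ (Icc 0 T) := by
    apply ContinuousOn.mul
    · exact (Real.continuous_exp.comp (continuous_const.mul continuous_id)).continuousOn
    · exact hxc.add ((continuous_const.mul hGc).continuousOn)
  have hψd : ∀ t ∈ Ioo (0:ℝ) T, HasDerivAt ψ
      ((K * exp (K * t)) * (x t + K' * G t) + exp (K * t) * (Dx t + K' * g t)) t := by
    intro t ht
    exact (exp_hasDerivAt K t).mul ((hxd t ht).add ((hGd t).const_mul K'))
  have hψ0 : ∀ t ∈ Ioo (0:ℝ) T, 0 ≤ (K * exp (K * t)) * (x t + K' * G t) + exp (K * t) * (Dx t + K' * g t) := by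
    intro t ht
    have hb' := hb t ht
    have he := exp_pos (K * t)
    have hGt : 0 ≤ G t := hGnn t ⟨ht.1.le, ht.2.le⟩
    have h1 : 0 ≤ Dx t + K * x t + K' * g t := by linarith
    have h2 : (K * exp (K * t)) * (x t + K' * G t) + exp (K * t) * (Dx t + K' * g t)
        = exp (K * t) * ((Dx t + K * x t + K' * g t) + K * (K' * G t)) := by ring
    rw [h2]
    have : 0 ≤ K * (K' * G t) := mul_nonneg hK (mul_nonneg hK' hGt)
    exact mul_nonneg he.le (by linarith)
  have hmono := mono_of_deriv hψc hψd hψ0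
  intro t ht
  have h1 : ψ 0 ≤ ψ t := hmono t ht
  have h2 : ψ 0 = x 0 := by simp [hψ, hG0]
  have h3 : (0:ℝ) ≤ exp (K * t) * (x t + K' * G t) := le_trans (h2 ▸ hx0) h1
  have he := exp_pos (K * t)
  nlinarith

lemma posdef_quad_lower {ι : Type*} [Fintype ι] [DecidableEq ι] {M : Matrix ι ι ℝ} (hM : M.PosDef) :
    ∃ ε > 0, ∀ x : ι → ℝ, ε * (∑ i, x i ^ 2) ≤ x ⬝ᵥ (M *ᵥ x) := by
  rcases isEmpty_or_nonempty ι with h | h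
  · exact ⟨1, one_pos, fun x => by simp [dotProduct]⟩
  have hM2 : ∀ x : ι → ℝ, x ≠ 0 → 0 < x ⬝ᵥ (M *ᵥ x) := by
    intro x hx; simpa using hM.dotProduct_mulVec_pos hx
  set f : (ι → ℝ) → ℝ := fun x => x ⬝ᵥ (M *ᵥ x) with hf
  have hfc : Continuous f := by
    simp only [hf, dotProduct, Matrix.mulVec]
    exact continuous_finset_sum _ fun i _ =>
      (continuous_apply i).mul (continuous_finset_sum _ fun j _ => (continuous_const.mul (continuous_apply j)))
  have hfsmul : ∀ (c : ℝ) (x : ι → ℝ), f (fun i => c * x i) = c ^ 2 * f x := by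
    intro c x
    simp only [hf, dotProduct, Matrix.mulVec, Finset.mul_sum]
    refine Finset.sum_congr rfl fun i _ => Finset.sum_congr rfl fun j _ => by ring
  set S : Set (ι → ℝ) := {x | ∑ i, x i ^ 2 = 1} with hS
  have hSc : IsCompact S := by
    have hcl : IsClosed S := isClosed_eq (continuous_finset_sum _ fun i _ => (continuous_apply i).pow 2) continuous_const
    have hbdd : Bornology.IsBounded S := by
      apply Bornology.IsBounded.subset (Metric.isBounded_closedBall (x := (0 : ι → ℝ)) (r := 1))
      intro x hx
      simp only [Metric.mem_closedBall, dist_zero_right]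
      rw [pi_norm_le_iff_of_nonneg zero_le_one]
      intro i
      have h1 : x i ^ 2 ≤ 1 := by
        have : ∑ j, x j ^ 2 = 1 := hx
        calc x i ^ 2 ≤ ∑ j, x j ^ 2 := Finset.single_le_sum (fun j _ => sq_nonneg (x j)) (Finset.mem_univ i)
        _ = 1 := this
      rw [Real.norm_eq_abs, ← abs_one]
      exact abs_le_abs (by nlinarith [abs_nonneg (x i), le_abs_self (x i)]) (by nlinarith [abs_nonneg (x i), neg_abs_le (x i)])
    exact Metric.isCompact_of_isClosed_isBounded hcl hbdd
  have hSne : S.Nonempty := by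
    refine ⟨Pi.single (Classical.arbitrary ι) 1, ?_⟩
    simp [hS, Pi.single_apply]
  obtain ⟨u, huS, hmin⟩ := hSc.exists_isMinOn hSne hfc.continuousOn
  rw [isMinOn_iff] at hmin
  have hu0 : u ≠ 0 := by
    intro h
    have : (∑ i, u i ^ 2) = 1 := huS
    rw [h] at this; simp at this
  refine ⟨f u, hM2 u hu0, fun x => ?_⟩
  rcases eq_or_ne x 0 with rfl | hx
  · simp [hf, dotProduct]
  · have hxi : ∃ i, x i ≠ 0 := Function.ne_iff.mp hx
    have hc : 0 < ∑ i, x i ^ 2 := by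
      obtain ⟨i, hi⟩ := hxi
      exact Finset.sum_pos' (fun j _ => sq_nonneg _) ⟨i, Finset.mem_univ i, by positivity⟩
    set cv := Real.sqrt (∑ i, x i ^ 2) with hcv
    have hcvpos : 0 < cv := Real.sqrt_pos.mpr hc
    have hcvsq : cv ^ 2 = ∑ i, x i ^ 2 := Real.sq_sqrt hc.le
    have hmem : (fun i => cv⁻¹ * x i) ∈ S := by
      simp only [hS, Set.mem_setOf_eq]
      have : ∀ i, (cv⁻¹ * x i) ^ 2 = cv⁻¹ ^ 2 * x i ^ 2 := fun i => by ring
      rw [Finset.sum_congr rfl fun i _ => this i, ← Finset.mul_sum, ← hcvsq]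
      field_simp
    have h1 := hmin _ hmem
    have h2 : f x = cv ^ 2 * f (fun i => cv⁻¹ * x i) := by
      rw [← hfsmul]
      congr 1
      funext i
      field_simp
    have hgoal : x ⬝ᵥ M *ᵥ x = f x := rfl
    rw [hgoal, h2, ← hcvsq]
    have := mul_le_mul_of_nonneg_left h1 (sq_nonneg cv)
    linarith [this]

lemma np_continuous : Continuous np := by
  unfold np; exact continuous_neg.max continuous_const
/-- Sufficient condition for convergence to the disease-free state of the
networked SAIR(S) model with permanent immunity (`δ_i = 0`): if the `2n×2n` block matrix
`[[qW, (1/2)W], [(1/2)W, (1−q)W]]` is strictly below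
`[[B⁻¹(Σ+K), −(1/2)B⁻¹Σ], [−(1/2)B⁻¹Σ, B⁻¹Γ]]` in the Loewner (positive-definite) order,
then along every solution starting in the simplex, `a_i(t) → 0` and `p_i(t) → 0`. -/
theorem nsairs_dfe_sufficient_condition
    (n : ℕ) (s a p r : Fin n → ℝ → ℝ)
    (β γ κ σ δ : Fin n → ℝ) (Wm : Matrix (Fin n) (Fin n) ℝ) (q : ℝ)
    (hβ : ∀ i, 0 < β i) (hγ : ∀ i, 0 < γ i) (hκ : ∀ i, 0 < κ i)
    (hσ : ∀ i, 0 < σ i) (hδ : ∀ i, δ i = 0)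
    (hWsymm : Wm.IsSymm) (hWnonneg : ∀ i j, 0 ≤ Wm i j)
    (hq0 : 0 ≤ q) (hq1 : q ≤ 1)
    (hs : ∀ i, ∀ t ≥ (0 : ℝ), HasDerivAt (s i)
      (-(β i) * s i t * (∑ j, Wm i j * (a j t + p j t)) + δ i * r i t) t)
    (ha : ∀ i, ∀ t ≥ (0 : ℝ), HasDerivAt (a i)
      (q * β i * s i t * (∑ j, Wm i j * (a j t + p j t)) - σ i * a i t - κ i * a i t) t)
    (hp : ∀ i, ∀ t ≥ (0 : ℝ), HasDerivAt (p i)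
      ((1 - q) * β i * s i t * (∑ j, Wm i j * (a j t + p j t)) + σ i * a i t - γ i * p i t) t)
    (hr : ∀ i, ∀ t ≥ (0 : ℝ), HasDerivAt (r i)
      (κ i * a i t + γ i * p i t - δ i * r i t) t)
    (h0 : ∀ i, s i 0 ∈ Set.Icc (0 : ℝ) 1 ∧ a i 0 ∈ Set.Icc (0 : ℝ) 1 ∧
      p i 0 ∈ Set.Icc (0 : ℝ) 1 ∧ r i 0 ∈ Set.Icc (0 : ℝ) 1)
    (hsum0 : ∀ i, s i 0 + a i 0 + p i 0 + r i 0 = 1)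
    (Bm Km Γm Sm : Matrix (Fin n) (Fin n) ℝ)
    (hBm : Bm = Matrix.diagonal β) (hKm : Km = Matrix.diagonal κ)
    (hΓm : Γm = Matrix.diagonal γ) (hSm : Sm = Matrix.diagonal σ)
    (hLoewner :
      (Matrix.fromBlocks (Bm⁻¹ * (Sm + Km)) (-((1 / 2 : ℝ) • (Bm⁻¹ * Sm)))
          (-((1 / 2 : ℝ) • (Bm⁻¹ * Sm))) (Bm⁻¹ * Γm)
        - Matrix.fromBlocks (q • Wm) ((1 / 2 : ℝ) • Wm)
          ((1 / 2 : ℝ) • Wm) ((1 - q) • Wm)).PosDef) :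
    ∀ i, Tendsto (a i) atTop (nhds 0) ∧ Tendsto (p i) atTop (nhds 0) := by
  rcases Nat.eq_zero_or_pos n with hn | hn
  · subst hn; exact fun i => i.elim0
  have hne : Nonempty (Fin n) := ⟨⟨0, hn⟩⟩
  -- continuity on [0,∞)
  have hsc : ∀ i, ContinuousOn (s i) (Ici 0) :=
    fun i t ht => ((hs i t ht).continuousAt).continuousWithinAt
  have hac : ∀ i, ContinuousOn (a i) (Ici 0) :=
    fun i t ht => ((ha i t ht).continuousAt).continuousWithinAt
  have hpc : ∀ i, ContinuousOn (p i) (Ici 0) :=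
    fun i t ht => ((hp i t ht).continuousAt).continuousWithinAt
  have hrc : ∀ i, ContinuousOn (r i) (Ici 0) :=
    fun i t ht => ((hr i t ht).continuousAt).continuousWithinAt
  -- STEP B : nonnegativity of all coordinates
  have nonneg : ∀ t : ℝ, 0 ≤ t → ∀ i, 0 ≤ s i t ∧ 0 ≤ a i t ∧ 0 ≤ p i t ∧ 0 ≤ r i t := by
    intro T hT
    have hmx : Continuous (fun t : ℝ => max t 0) := continuous_id.max continuous_const
    have hmx0 : ∀ t : ℝ, (0:ℝ) ≤ max t 0 := fun t => le_max_right t 0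
    have hmxeq : ∀ t : ℝ, 0 ≤ t → max t 0 = t := fun t ht => max_eq_left ht
    have hshc : ∀ i : Fin n, Continuous (fun t : ℝ => s i (max t 0)) := fun i =>
      continuousOn_univ.mp ((hsc i).comp hmx.continuousOn fun t _ => hmx0 t)
    have hahc : ∀ i : Fin n, Continuous (fun t : ℝ => a i (max t 0)) := fun i =>
      continuousOn_univ.mp ((hac i).comp hmx.continuousOn fun t _ => hmx0 t)
    have hphc : ∀ i : Fin n, Continuous (fun t : ℝ => p i (max t 0)) := fun i =>
      continuousOn_univ.mp ((hpc i).comp hmx.continuousOn fun t _ => hmx0 t)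
    have hrhc : ∀ i : Fin n, Continuous (fun t : ℝ => r i (max t 0)) := fun i =>
      continuousOn_univ.mp ((hrc i).comp hmx.continuousOn fun t _ => hmx0 t)
    set g : ℝ → ℝ := fun t => ∑ i, (np (s i (max t 0)) + np (a i (max t 0))
      + np (p i (max t 0)) + np (r i (max t 0))) with hg_def
    have hgc : Continuous g := continuous_finset_sum _ fun i _ =>
      (((np_continuous.comp (hshc i)).add (np_continuous.comp (hahc i))).add
        (np_continuous.comp (hphc i))).add (np_continuous.comp (hrhc i))
    have hgnn : ∀ t, 0 ≤ g t := fun t => Finset.sum_nonneg fun i _ =>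
      add_nonneg (add_nonneg (add_nonneg (np_nonneg _) (np_nonneg _)) (np_nonneg _))
        (np_nonneg _)
    set G : ℝ → ℝ := fun t => ∫ u in (0:ℝ)..t, g u with hG_def
    have hGd : ∀ t : ℝ, HasDerivAt G (g t) t := fun t =>
      (hgc.integral_hasStrictDerivAt 0 t).hasDerivAt
    have hGc : Continuous G := continuous_iff_continuousAt.mpr fun u => (hGd u).continuousAt
    have hG0 : G 0 = 0 := by simp [hG_def]
    have hGnn : ∀ t ∈ Icc (0:ℝ) T, 0 ≤ G t := fun t ht' =>
      intervalIntegral.integral_nonneg ht'.1 fun u _ => hgnn u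
    have hnpg : ∀ t ∈ Icc (0:ℝ) T, ∀ i : Fin n,
        np (s i t) ≤ g t ∧ np (a i t) ≤ g t ∧ np (p i t) ≤ g t ∧ np (r i t) ≤ g t := by
      intro t ht' i
      have hterm : np (s i (max t 0)) + np (a i (max t 0)) + np (p i (max t 0))
          + np (r i (max t 0)) ≤ g t :=
        Finset.single_le_sum (f := fun j => np (s j (max t 0)) + np (a j (max t 0))
          + np (p j (max t 0)) + np (r j (max t 0)))
          (fun j _ => add_nonneg (add_nonneg (add_nonneg (np_nonneg _) (np_nonneg _))
            (np_nonneg _)) (np_nonneg _)) (Finset.mem_univ i)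
      rw [hmxeq t ht'.1] at hterm
      have n1 := np_nonneg (s i t); have n2 := np_nonneg (a i t)
      have n3 := np_nonneg (p i t); have n4 := np_nonneg (r i t)
      exact ⟨by linarith, by linarith, by linarith, by linarith⟩
    -- uniform bound M on [0,T]
    set F : ℝ → ℝ := fun t => ∑ i, (|s i (max t 0)| + |a i (max t 0)| + |p i (max t 0)|
      + |r i (max t 0)|) with hF_def
    have hFc : Continuous F := continuous_finset_sum _ fun i _ =>
      (((hshc i).abs.add (hahc i).abs).add (hphc i).abs).add (hrhc i).abs
    obtain ⟨t₀, ht₀, hmax⟩ := isCompact_Icc.exists_isMaxOn ⟨0, left_mem_Icc.mpr hT⟩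
      hFc.continuousOn
    rw [isMaxOn_iff] at hmax
    set M : ℝ := max (F t₀) 1 with hM_def
    have hM1 : (1:ℝ) ≤ M := le_max_right _ _
    have hM0 : (0:ℝ) < M := lt_of_lt_of_le one_pos hM1
    have hMb : ∀ t ∈ Icc (0:ℝ) T, ∀ i, |s i t| ≤ M ∧ |a i t| ≤ M ∧ |p i t| ≤ M
        ∧ |r i t| ≤ M := by
      intro t ht' i
      have h1 : F t ≤ M := le_trans (hmax t ht') (le_max_left _ _)
      have hterm : |s i (max t 0)| + |a i (max t 0)| + |p i (max t 0)| + |r i (max t 0)| ≤ F t :=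
        Finset.single_le_sum (f := fun j => |s j (max t 0)| + |a j (max t 0)| + |p j (max t 0)|
          + |r j (max t 0)|) (fun j _ => by positivity) (Finset.mem_univ i)
      rw [hmxeq t ht'.1] at hterm
      have n1 := abs_nonneg (s i t); have n2 := abs_nonneg (a i t)
      have n3 := abs_nonneg (p i t); have n4 := abs_nonneg (r i t)
      exact ⟨by linarith, by linarith, by linarith, by linarith⟩
    -- parameter bounds
    set Pb : ℝ := (∑ i, (β i + σ i + κ i + γ i)) + 1 with hPb_def
    have hsum_nonneg : 0 ≤ ∑ i, (β i + σ i + κ i + γ i) := Finset.sum_nonneg fun i _ => by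
      have := (hβ i).le; have := (hσ i).le; have := (hκ i).le; have := (hγ i).le; linarith
    have hPb1 : (1:ℝ) ≤ Pb := by simp only [hPb_def]; linarith
    have hPb0 : (0:ℝ) < Pb := lt_of_lt_of_le one_pos hPb1
    have hPbb : ∀ i, β i + σ i + κ i + γ i ≤ Pb := by
      intro i
      have h1 : β i + σ i + κ i + γ i ≤ ∑ j, (β j + σ j + κ j + γ j) :=
        Finset.single_le_sum (f := fun j => β j + σ j + κ j + γ j) (fun j _ => by
          show (0:ℝ) ≤ β j + σ j + κ j + γ j
          linarith [(hβ j).le, (hσ j).le, (hκ j).le, (hγ j).le])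
          (Finset.mem_univ i)
      simp only [hPb_def]; linarith
    have hPbβ : ∀ i, β i ≤ Pb := fun i => by
      have := hPbb i; have := (hσ i).le; have := (hκ i).le; have := (hγ i).le; linarith
    have hPbσ : ∀ i, σ i ≤ Pb := fun i => by
      have := hPbb i; have := (hβ i).le; have := (hκ i).le; have := (hγ i).le; linarith
    have hPbκ : ∀ i, κ i ≤ Pb := fun i => by
      have := hPbb i; have := (hβ i).le; have := (hσ i).le; have := (hγ i).le; linarith
    have hPbγ : ∀ i, γ i ≤ Pb := fun i => by
      have := hPbb i; have := (hβ i).le; have := (hσ i).le; have := (hκ i).le; linarith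
    have hPbσκ : ∀ i, σ i + κ i ≤ Pb := fun i => by
      have := hPbb i; have := (hβ i).le; have := (hγ i).le; linarith
    set Wb : ℝ := (∑ i, ∑ j, Wm i j) + 1 with hWb_def
    have hWsum_nonneg : 0 ≤ ∑ i, ∑ j, Wm i j :=
      Finset.sum_nonneg fun i _ => Finset.sum_nonneg fun j _ => hWnonneg i j
    have hWb1 : (1:ℝ) ≤ Wb := by simp only [hWb_def]; linarith
    have hWb0 : (0:ℝ) < Wb := lt_of_lt_of_le one_pos hWb1
    have hWbW : ∀ i j, Wm i j ≤ Wb := by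
      intro i j
      have h1 : Wm i j ≤ ∑ j', Wm i j' :=
        Finset.single_le_sum (fun j' _ => hWnonneg i j') (Finset.mem_univ j)
      have h2 : ∑ j', Wm i j' ≤ ∑ i', ∑ j', Wm i' j' :=
        Finset.single_le_sum (f := fun i' => ∑ j', Wm i' j')
          (fun i' _ => Finset.sum_nonneg fun j' _ => hWnonneg i' j') (Finset.mem_univ i)
      simp only [hWb_def]; linarith
    set K : ℝ := 4 * M * Pb * Wb * ((n : ℝ) + 1) with hK_def
    have hn0 : (0:ℝ) ≤ (n : ℝ) := Nat.cast_nonneg n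
    have hK0 : (0:ℝ) < K := by
      simp only [hK_def]
      have : (0:ℝ) < (n : ℝ) + 1 := by linarith
      positivity
    have hfac : (1:ℝ) ≤ 4 * M * Wb * ((n:ℝ) + 1) := by
      nlinarith [mul_nonneg (sub_nonneg.mpr hM1) (sub_nonneg.mpr hWb1), hn0, hM1, hWb1,
        mul_nonneg (mul_nonneg hM0.le hWb0.le) hn0]
    have hPbK : Pb ≤ K := by
      have := mul_le_mul_of_nonneg_left hfac hPb0.le
      simp only [hK_def]
      nlinarith [this]
    -- infection pressure bound
    have hIb : ∀ t ∈ Icc (0:ℝ) T, ∀ i, |∑ j, Wm i j * (a j t + p j t)| ≤ 2 * M * Wb * n := by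
      intro t ht' i
      calc |∑ j, Wm i j * (a j t + p j t)| ≤ ∑ j, |Wm i j * (a j t + p j t)| :=
            Finset.abs_sum_le_sum_abs _ _
        _ ≤ ∑ _j : Fin n, Wb * (2 * M) := by
            refine Finset.sum_le_sum fun j _ => ?_
            rw [abs_mul]
            have h1 : |Wm i j| ≤ Wb := by
              rw [abs_of_nonneg (hWnonneg i j)]; exact hWbW i j
            have h2 : |a j t + p j t| ≤ 2 * M := le_trans (abs_add_le _ _)
              (by linarith [(hMb t ht' j).2.1, (hMb t ht' j).2.2.1])
            exact mul_le_mul h1 h2 (abs_nonneg _) (by linarith)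
        _ = 2 * M * Wb * n := by
            rw [Finset.sum_const, Finset.card_univ, Fintype.card_fin, nsmul_eq_mul]
            ring
    -- lower bound on s * infection pressure
    have hsIlow : ∀ t ∈ Icc (0:ℝ) T, ∀ i,
        -(6 * M * Wb * (n : ℝ) * g t) ≤ s i t * (∑ j, Wm i j * (a j t + p j t)) := by
      intro t ht' i
      have h2 : s i t * (∑ j, Wm i j * (a j t + p j t))
          = ∑ j, Wm i j * (s i t * (a j t + p j t)) := by
        rw [Finset.mul_sum]
        exact Finset.sum_congr rfl fun j _ => by ring
      have h1 : ∀ j, -(2 * M * (3 * g t)) ≤ s i t * (a j t + p j t) := by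
        intro j
        have hbs := (hMb t ht' i).1
        have hba := (hMb t ht' j).2.1
        have hbp := (hMb t ht' j).2.2.1
        have hu : |s i t| ≤ 2 * M := by linarith
        have hv : |a j t + p j t| ≤ 2 * M := le_trans (abs_add_le _ _) (by linarith)
        have hml := mul_lower hu hv
        have hn1 : np (s i t) ≤ g t := (hnpg t ht' i).1
        have hn2 : np (a j t + p j t) ≤ np (a j t) + np (p j t) := np_add_le _ _
        have hn3 : np (a j t) ≤ g t := (hnpg t ht' j).2.1
        have hn4 : np (p j t) ≤ g t := (hnpg t ht' j).2.2.1
        have h5 : np (s i t) + np (a j t + p j t) ≤ 3 * g t := by linarith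
        have h6 := mul_le_mul_of_nonneg_left h5 (by linarith : (0:ℝ) ≤ 2 * M)
        linarith
      rw [h2]
      have hY : (0:ℝ) ≤ 2 * M * (3 * g t) := by
        have := hgnn t; nlinarith
      calc -(6 * M * Wb * (n : ℝ) * g t) = ∑ _j : Fin n, -(Wb * (2 * M * (3 * g t))) := by
            rw [Finset.sum_const, Finset.card_univ, Fintype.card_fin, nsmul_eq_mul]
            ring
        _ ≤ ∑ j, Wm i j * (s i t * (a j t + p j t)) := by
            refine Finset.sum_le_sum fun j _ => ?_
            have t1 := mul_nonneg (hWnonneg i j)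
              (by linarith [h1 j] : (0:ℝ) ≤ s i t * (a j t + p j t) + 2 * M * (3 * g t))
            have t2 := mul_nonneg (sub_nonneg.mpr (hWbW i j)) hY
            nlinarith [t1, t2]
    -- budgets (multiplied by g)
    have hbudA : ∀ t, 6 * M * Pb * Wb * (n : ℝ) * g t + 2 * (K * g t) ≤ 4 * K * g t := by
      intro t
      have h1 : 6 * M * Pb * Wb * (n : ℝ) ≤ 2 * K := by
        simp only [hK_def]
        nlinarith [mul_nonneg (mul_nonneg (mul_nonneg hM0.le hPb0.le) hWb0.le) hn0,
          mul_nonneg (mul_nonneg hM0.le hPb0.le) hWb0.le]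
      linarith [mul_le_mul_of_nonneg_right h1 (hgnn t)]
    have hbudP : ∀ t, 6 * M * Pb * Wb * (n : ℝ) * g t + Pb * g t + 2 * (K * g t)
        ≤ 4 * K * g t := by
      intro t
      have h1 : 6 * M * Pb * Wb * (n : ℝ) + Pb ≤ 2 * K := by
        simp only [hK_def]
        nlinarith [mul_nonneg (mul_nonneg (sub_nonneg.mpr hM1) (sub_nonneg.mpr hWb1)) hPb0.le,
          mul_nonneg (sub_nonneg.mpr hM1) hPb0.le, mul_nonneg (sub_nonneg.mpr hWb1) hPb0.le,
          mul_nonneg (mul_nonneg (mul_nonneg hM0.le hPb0.le) hWb0.le) hn0, hPb0.le]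
      linarith [mul_le_mul_of_nonneg_right h1 (hgnn t)]
    have hbudR : ∀ t, 2 * (Pb * g t) + K * g t ≤ 4 * K * g t := by
      intro t
      have h1 : 2 * Pb + K ≤ 4 * K := by linarith [hPbK, hK0.le]
      linarith [mul_le_mul_of_nonneg_right h1 (hgnn t)]
    -- the coefficient bound for the s equation
    have hcoef : ∀ t ∈ Icc (0:ℝ) T, ∀ i, |β i * (∑ j, Wm i j * (a j t + p j t))| ≤ K := by
      intro t ht' i
      rw [abs_mul, abs_of_pos (hβ i)]
      have h1 := hIb t ht' i
      have h2 : β i * |∑ j, Wm i j * (a j t + p j t)| ≤ Pb * (2 * M * Wb * n) := by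
        have := mul_le_mul (hPbβ i) h1 (abs_nonneg _) hPb0.le
        linarith
      have h3 : Pb * (2 * M * Wb * (n:ℝ)) ≤ K := by
        simp only [hK_def]
        nlinarith [mul_nonneg (mul_nonneg (mul_nonneg hM0.le hPb0.le) hWb0.le) hn0,
          mul_nonneg (mul_nonneg hM0.le hPb0.le) hWb0.le]
      linarith
    -- coordinate s
    have hsstep : ∀ i, ∀ t ∈ Icc (0:ℝ) T, -(4 * K * G t) ≤ s i t := by
      intro i
      refine orthant_step hK0.le (by linarith [hK0.le] : (0:ℝ) ≤ 4 * K) (h0 i).1.1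
        ((hsc i).mono Icc_subset_Ici_self) (fun t ht' => hs i t ht'.1.le) hGd hG0 hGnn ?_
      intro t ht'
      have htIcc : t ∈ Icc (0:ℝ) T := ⟨ht'.1.le, ht'.2.le⟩
      rw [hδ i]
      have h2 := hcoef t htIcc i
      have h3 : β i * (∑ j, Wm i j * (a j t + p j t)) * s i t ≤ K * |s i t| := by
        calc β i * (∑ j, Wm i j * (a j t + p j t)) * s i t
            ≤ |β i * (∑ j, Wm i j * (a j t + p j t)) * s i t| := le_abs_self _
          _ = |β i * (∑ j, Wm i j * (a j t + p j t))| * |s i t| := abs_mul _ _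
          _ ≤ K * |s i t| := mul_le_mul_of_nonneg_right h2 (abs_nonneg _)
      have h4 : K * |s i t| = K * s i t + 2 * (K * np (s i t)) := by
        rw [abs_eq_add_np]; ring
      have h5 : K * np (s i t) ≤ K * g t :=
        mul_le_mul_of_nonneg_left (hnpg t htIcc i).1 hK0.le
      have hg := hgnn t
      nlinarith [h3, h4, h5, hK0.le, mul_nonneg hK0.le hg]
    -- coordinate a
    have hastep : ∀ i, ∀ t ∈ Icc (0:ℝ) T, -(4 * K * G t) ≤ a i t := by
      intro i
      refine orthant_step hK0.le (by linarith [hK0.le] : (0:ℝ) ≤ 4 * K) (h0 i).2.1.1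
        ((hac i).mono Icc_subset_Ici_self) (fun t ht' => ha i t ht'.1.le) hGd hG0 hGnn ?_
      intro t ht'
      have htIcc : t ∈ Icc (0:ℝ) T := ⟨ht'.1.le, ht'.2.le⟩
      have h1 := hsIlow t htIcc i
      have hqβ0 : (0:ℝ) ≤ q * β i := mul_nonneg hq0 (hβ i).le
      have hqβP : q * β i ≤ Pb := by
        nlinarith [mul_nonneg (sub_nonneg.mpr hq1) (hβ i).le, hPbβ i]
      have h2 := mul_le_mul_of_nonneg_left h1 hqβ0
      have h3 : (0:ℝ) ≤ 6 * M * Wb * (n:ℝ) * g t := by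
        have h31 := mul_nonneg (mul_nonneg (mul_nonneg hM0.le hWb0.le) hn0) (hgnn t)
        linarith
      have h4 := mul_le_mul_of_nonpos_right hqβP (by linarith : -(6 * M * Wb * (n:ℝ) * g t) ≤ 0)
      have h5 := lin_lower (by linarith [(hσ i).le, (hκ i).le] : (0:ℝ) ≤ σ i + κ i)
        (le_trans (hPbσκ i) hPbK) (hnpg t htIcc i).2.1 (hgnn t)
      have h6 := hbudA t
      linarith [h2, h4, h5, h6]
    -- coordinate p
    have hpstep : ∀ i, ∀ t ∈ Icc (0:ℝ) T, -(4 * K * G t) ≤ p i t := by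
      intro i
      refine orthant_step hK0.le (by linarith [hK0.le] : (0:ℝ) ≤ 4 * K) (h0 i).2.2.1.1
        ((hpc i).mono Icc_subset_Ici_self) (fun t ht' => hp i t ht'.1.le) hGd hG0 hGnn ?_
      intro t ht'
      have htIcc : t ∈ Icc (0:ℝ) T := ⟨ht'.1.le, ht'.2.le⟩
      have h1 := hsIlow t htIcc i
      have hqβ0 : (0:ℝ) ≤ (1 - q) * β i := mul_nonneg (by linarith) (hβ i).le
      have hqβP : (1 - q) * β i ≤ Pb := by
        nlinarith [mul_nonneg hq0 (hβ i).le, hPbβ i]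
      have h2 := mul_le_mul_of_nonneg_left h1 hqβ0
      have h3 : (0:ℝ) ≤ 6 * M * Wb * (n:ℝ) * g t := by
        have h31 := mul_nonneg (mul_nonneg (mul_nonneg hM0.le hWb0.le) hn0) (hgnn t)
        linarith
      have h4 := mul_le_mul_of_nonpos_right hqβP (by linarith : -(6 * M * Wb * (n:ℝ) * g t) ≤ 0)
      have hag : -(g t) ≤ a i t :=
        le_trans (neg_le_neg (hnpg t htIcc i).2.1) (neg_np_le _)
      have h5 : -(Pb * g t) ≤ σ i * a i t := by
        have h51 := mul_le_mul_of_nonneg_left hag (hσ i).le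
        have h52 := mul_le_mul_of_nonneg_right (hPbσ i) (hgnn t)
        linarith [h51, h52]
      have h6 := lin_lower (hγ i).le (le_trans (hPbγ i) hPbK) (hnpg t htIcc i).2.2.1 (hgnn t)
      have h7 := hbudP t
      linarith [h2, h4, h5, h6, h7]
    -- coordinate r
    have hrstep : ∀ i, ∀ t ∈ Icc (0:ℝ) T, -(4 * K * G t) ≤ r i t := by
      intro i
      refine orthant_step hK0.le (by linarith [hK0.le] : (0:ℝ) ≤ 4 * K) (h0 i).2.2.2.1
        ((hrc i).mono Icc_subset_Ici_self) (fun t ht' => hr i t ht'.1.le) hGd hG0 hGnn ?_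
      intro t ht'
      have htIcc : t ∈ Icc (0:ℝ) T := ⟨ht'.1.le, ht'.2.le⟩
      rw [hδ i]
      have hag : -(g t) ≤ a i t :=
        le_trans (neg_le_neg (hnpg t htIcc i).2.1) (neg_np_le _)
      have hpg : -(g t) ≤ p i t :=
        le_trans (neg_le_neg (hnpg t htIcc i).2.2.1) (neg_np_le _)
      have hrg : -(g t) ≤ r i t :=
        le_trans (neg_le_neg (hnpg t htIcc i).2.2.2) (neg_np_le _)
      have h1 : -(Pb * g t) ≤ κ i * a i t := by
        have h11 := mul_le_mul_of_nonneg_left hag (hκ i).le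
        have h12 := mul_le_mul_of_nonneg_right (hPbκ i) (hgnn t)
        linarith [h11, h12]
      have h2 : -(Pb * g t) ≤ γ i * p i t := by
        have h21 := mul_le_mul_of_nonneg_left hpg (hγ i).le
        have h22 := mul_le_mul_of_nonneg_right (hPbγ i) (hgnn t)
        linarith [h21, h22]
      have h3 : -(K * r i t) ≤ K * g t := by
        have := mul_le_mul_of_nonneg_left hrg hK0.le
        linarith [this]
      have h4 := hbudR t
      linarith [h1, h2, h3, h4]
    -- G vanishes on [0, T]
    have hgle : ∀ t ∈ Icc (0:ℝ) T, g t ≤ (16 * (n:ℝ) * K + 1) * G t := by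
      intro t ht'
      have hKG : (0:ℝ) ≤ 4 * K * G t := by
        have := mul_nonneg hK0.le (hGnn t ht')
        linarith
      have h5 : g t = ∑ i, (np (s i t) + np (a i t) + np (p i t) + np (r i t)) := by
        simp only [hg_def, hmxeq t ht'.1]
      rw [h5]
      have h6 : ∑ i, (np (s i t) + np (a i t) + np (p i t) + np (r i t))
          ≤ ∑ _i : Fin n, 4 * (4 * K * G t) := by
        refine Finset.sum_le_sum fun i _ => ?_
        have e1 : np (s i t) ≤ 4 * K * G t := np_le (hsstep i t ht') hKG
        have e2 : np (a i t) ≤ 4 * K * G t := np_le (hastep i t ht') hKG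
        have e3 : np (p i t) ≤ 4 * K * G t := np_le (hpstep i t ht') hKG
        have e4 : np (r i t) ≤ 4 * K * G t := np_le (hrstep i t ht') hKG
        linarith
      have h7 : ∑ _i : Fin n, 4 * (4 * K * G t) = (n:ℝ) * (16 * K * G t) := by
        rw [Finset.sum_const, Finset.card_univ, Fintype.card_fin, nsmul_eq_mul]
        ring
      have h8 := hGnn t ht'
      linarith [h6, h7, h8]
    have hGzero : ∀ t ∈ Icc (0:ℝ) T, G t = 0 := by
      have hfc : ContinuousOn (fun t => -(exp (-(16 * (n:ℝ) * K + 1) * t) * G t)) (Icc 0 T) :=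
        (((Real.continuous_exp.comp (continuous_const.mul continuous_id)).mul hGc).neg).continuousOn
      have hfd : ∀ t ∈ Ioo (0:ℝ) T, HasDerivAt (fun t => -(exp (-(16 * (n:ℝ) * K + 1) * t) * G t))
          (-((-(16 * (n:ℝ) * K + 1) * exp (-(16 * (n:ℝ) * K + 1) * t)) * G t
            + exp (-(16 * (n:ℝ) * K + 1) * t) * g t)) t :=
        fun t _ => ((exp_hasDerivAt (-(16 * (n:ℝ) * K + 1)) t).mul (hGd t)).neg
      have hf0 : ∀ t ∈ Ioo (0:ℝ) T,
          0 ≤ -((-(16 * (n:ℝ) * K + 1) * exp (-(16 * (n:ℝ) * K + 1) * t)) * G t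
            + exp (-(16 * (n:ℝ) * K + 1) * t) * g t) := by
        intro t ht'
        have h1 := hgle t ⟨ht'.1.le, ht'.2.le⟩
        have h2 : -((-(16 * (n:ℝ) * K + 1) * exp (-(16 * (n:ℝ) * K + 1) * t)) * G t
            + exp (-(16 * (n:ℝ) * K + 1) * t) * g t)
            = exp (-(16 * (n:ℝ) * K + 1) * t) * ((16 * (n:ℝ) * K + 1) * G t - g t) := by ring
        rw [h2]
        exact mul_nonneg (exp_pos _).le (by linarith)
      have hmono := mono_of_deriv hfc hfd hf0
      intro t ht'
      have h1 := hmono t ht'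
      have h2 : -(exp (-(16 * (n:ℝ) * K + 1) * 0) * G 0) = 0 := by simp [hG0]
      rw [h2] at h1
      have h3 := exp_pos (-(16 * (n:ℝ) * K + 1) * t)
      have h4 : exp (-(16 * (n:ℝ) * K + 1) * t) * G t ≤ 0 := by linarith
      have h5 := hGnn t ht'
      have h6 : G t ≤ 0 := by
        have h7 : exp (-(16 * (n:ℝ) * K + 1) * t) * G t ≤ exp (-(16 * (n:ℝ) * K + 1) * t) * 0 := by
          rw [mul_zero]; exact h4
        exact (mul_le_mul_iff_right₀ h3).mp h7
      linarith
    -- conclusion at time T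
    intro i
    have hTm : T ∈ Icc (0:ℝ) T := ⟨hT, le_rfl⟩
    have hz := hGzero T hTm
    have e1 := hsstep i T hTm
    have e2 := hastep i T hTm
    have e3 := hpstep i T hTm
    have e4 := hrstep i T hTm
    rw [hz] at e1 e2 e3 e4
    simp only [mul_zero, neg_zero] at e1 e2 e3 e4
    exact ⟨e1, e2, e3, e4⟩
  -- STEP C : total population 1 and s ≤ 1
  have hsum : ∀ i, ∀ t : ℝ, 0 ≤ t → s i t + a i t + p i t + r i t = 1 := by
    intro i t ht
    have hNd : ∀ u ∈ Icc (0:ℝ) t, HasDerivAt (fun u => s i u + a i u + p i u + r i u) 0 u := by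
      intro u hu
      have h1 := (((hs i u hu.1).add (ha i u hu.1)).add (hp i u hu.1)).add (hr i u hu.1)
      refine h1.congr_deriv ?_
      ring
    have hNc : ContinuousOn (fun u => s i u + a i u + p i u + r i u) (Icc 0 t) :=
      fun u hu => (hNd u hu).continuousAt.continuousWithinAt
    have h1 := mono_of_deriv hNc (fun u hu => hNd u ⟨hu.1.le, hu.2.le⟩) (fun _ _ => le_rfl) t
      ⟨ht, le_rfl⟩
    have hNd' : ∀ u ∈ Ioo (0:ℝ) t, HasDerivAt (fun u => -(s i u + a i u + p i u + r i u)) 0 u := by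
      intro u hu
      have := (hNd u ⟨hu.1.le, hu.2.le⟩).neg; rw [neg_zero] at this; exact this
    have h2 := mono_of_deriv (hNc.neg) hNd' (fun _ _ => le_rfl) t ⟨ht, le_rfl⟩
    have h3 := hsum0 i
    simp only [Pi.neg_apply] at h2
    linarith
  have hsle1 : ∀ i, ∀ t : ℝ, 0 ≤ t → s i t ≤ 1 := by
    intro i t ht
    have h1 := hsum i t ht
    obtain ⟨-, h2, h3, h4⟩ := nonneg t ht i
    linarith
  -- STEP D : Lyapunov decay
  obtain ⟨ε, hεpos, hquad⟩ := posdef_quad_lower hLoewner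
  obtain ⟨i₁, -, hi₁⟩ := Finset.exists_min_image (Finset.univ : Finset (Fin n)) β
    Finset.univ_nonempty
  set c : ℝ := 2 * ε * β i₁ with hc_def
  have hc : 0 < c := by have := hβ i₁; positivity
  set V : ℝ → ℝ := fun t => ∑ i, (β i)⁻¹ * ((a i t) ^ 2 + (p i t) ^ 2) with hV_def
  set DV : ℝ → ℝ := fun t => ∑ i, (β i)⁻¹ *
      (2 * a i t * (q * β i * s i t * (∑ j, Wm i j * (a j t + p j t)) - σ i * a i t - κ i * a i t)
      + 2 * p i t * ((1 - q) * β i * s i t * (∑ j, Wm i j * (a j t + p j t)) + σ i * a i t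
        - γ i * p i t)) with hDV_def
  have hVd : ∀ t : ℝ, 0 ≤ t → HasDerivAt V (DV t) t := by
    intro t ht
    apply HasDerivAt.fun_sum
    intro i _
    have h2a : HasDerivAt (fun u => (a i u) ^ 2)
        (2 * a i t * (q * β i * s i t * (∑ j, Wm i j * (a j t + p j t)) - σ i * a i t
          - κ i * a i t)) t := by
      have := (ha i t ht).pow 2
      refine this.congr_deriv ?_
      push_cast
      ring
    have h2p : HasDerivAt (fun u => (p i u) ^ 2)
        (2 * p i t * ((1 - q) * β i * s i t * (∑ j, Wm i j * (a j t + p j t)) + σ i * a i t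
          - γ i * p i t)) t := by
      have := (hp i t ht).pow 2
      refine this.congr_deriv ?_
      push_cast
      ring
    exact (h2a.add h2p).const_mul _
  have hkey : ∀ t : ℝ, 0 ≤ t → DV t ≤ -(c * V t) := by
    intro t ht
    have hA : ∀ i, 0 ≤ a i t := fun i => (nonneg t ht i).2.1
    have hP : ∀ i, 0 ≤ p i t := fun i => (nonneg t ht i).2.2.1
    have hS0 : ∀ i, 0 ≤ s i t := fun i => (nonneg t ht i).1
    have hS1 : ∀ i, s i t ≤ 1 := fun i => hsle1 i t ht
    have hTT : ∀ i, 0 ≤ ∑ j, Wm i j * (a j t + p j t) := fun i =>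
      Finset.sum_nonneg fun j _ => mul_nonneg (hWnonneg i j) (add_nonneg (hA j) (hP j))
    have hW' : ∀ i j, Wm j i = Wm i j := fun i j => hWsymm.apply i j
    -- matrix block computations
    have hBinv : Bm⁻¹ = Matrix.diagonal (fun i => (β i)⁻¹) := by
      rw [hBm]
      apply Matrix.inv_eq_right_inv
      rw [Matrix.diagonal_mul_diagonal]
      convert Matrix.diagonal_one using 2
      funext i
      exact mul_inv_cancel₀ (hβ i).ne'
    have hL1 : Bm⁻¹ * (Sm + Km) = Matrix.diagonal (fun i => (β i)⁻¹ * (σ i + κ i)) := by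
      rw [hBinv, hSm, hKm, Matrix.diagonal_add, Matrix.diagonal_mul_diagonal]
    have hL2 : (-((1 / 2 : ℝ) • (Bm⁻¹ * Sm)))
        = Matrix.diagonal (fun i => -(1 / 2 * ((β i)⁻¹ * σ i))) := by
      rw [hBinv, hSm, Matrix.diagonal_mul_diagonal, ← Matrix.diagonal_smul,
        ← Matrix.diagonal_neg]
      rfl
    have hL3 : Bm⁻¹ * Γm = Matrix.diagonal (fun i => (β i)⁻¹ * γ i) := by
      rw [hBinv, hΓm, Matrix.diagonal_mul_diagonal]
    -- dot product helper lemmas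
    have hdotW : ∀ x y : Fin n → ℝ, x ⬝ᵥ (Wm *ᵥ y) = ∑ i, ∑ j, x i * Wm i j * y j := by
      intro x y
      unfold dotProduct Matrix.mulVec dotProduct
      refine Finset.sum_congr rfl fun i _ => ?_
      rw [Finset.mul_sum]
      exact Finset.sum_congr rfl fun j _ => by ring
    have hdotsmul : ∀ (cc : ℝ) (x y : Fin n → ℝ),
        x ⬝ᵥ ((cc • Wm) *ᵥ y) = cc * (∑ i, ∑ j, x i * Wm i j * y j) := by
      intro cc x y
      rw [Matrix.smul_mulVec, dotProduct_smul, smul_eq_mul, hdotW]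
    have hdotdiag : ∀ (f : Fin n → ℝ) (x y : Fin n → ℝ),
        x ⬝ᵥ (Matrix.diagonal f *ᵥ y) = ∑ i, f i * (x i * y i) := by
      intro f x y
      unfold dotProduct
      simp only [Matrix.mulVec_diagonal]
      exact Finset.sum_congr rfl fun i _ => by ring
    -- quadratic form expansion
    have hyQ : (Sum.elim (fun i => a i t) (fun i => p i t)) ⬝ᵥ
        ((Matrix.fromBlocks (Bm⁻¹ * (Sm + Km)) (-((1 / 2 : ℝ) • (Bm⁻¹ * Sm)))
          (-((1 / 2 : ℝ) • (Bm⁻¹ * Sm))) (Bm⁻¹ * Γm)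
        - Matrix.fromBlocks (q • Wm) ((1 / 2 : ℝ) • Wm)
          ((1 / 2 : ℝ) • Wm) ((1 - q) • Wm)) *ᵥ (Sum.elim (fun i => a i t) (fun i => p i t)))
        = (∑ i, (β i)⁻¹ * (σ i + κ i) * (a i t) ^ 2)
          - (∑ i, (β i)⁻¹ * σ i * (a i t * p i t))
          + (∑ i, (β i)⁻¹ * γ i * (p i t) ^ 2)
          - (q * (∑ i, ∑ j, a i t * Wm i j * a j t)
            + 1 / 2 * (∑ i, ∑ j, a i t * Wm i j * p j t)
            + 1 / 2 * (∑ i, ∑ j, p i t * Wm i j * a j t)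
            + (1 - q) * (∑ i, ∑ j, p i t * Wm i j * p j t)) := by
      rw [hL1, hL2, hL3, Matrix.sub_mulVec, dotProduct_sub, Matrix.fromBlocks_mulVec,
        Matrix.fromBlocks_mulVec, sumElim_dotProduct_sumElim,
        sumElim_dotProduct_sumElim, dotProduct_add, dotProduct_add,
        dotProduct_add, dotProduct_add,
        hdotdiag, hdotdiag, hdotdiag, hdotdiag, hdotsmul, hdotsmul, hdotsmul, hdotsmul]
      simp only [Sum.elim_comp_inl, Sum.elim_comp_inr]
      have e1 : ∑ i, (β i)⁻¹ * (σ i + κ i) * ((a i t) * (a i t))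
          = ∑ i, (β i)⁻¹ * (σ i + κ i) * (a i t) ^ 2 :=
        Finset.sum_congr rfl fun i _ => by ring
      have e2 : ∑ i, -(1 / 2 * ((β i)⁻¹ * σ i)) * ((a i t) * (p i t))
          = -(1 / 2) * ∑ i, (β i)⁻¹ * σ i * (a i t * p i t) := by
        rw [Finset.mul_sum]; exact Finset.sum_congr rfl fun i _ => by ring
      have e3 : ∑ i, -(1 / 2 * ((β i)⁻¹ * σ i)) * ((p i t) * (a i t))
          = -(1 / 2) * ∑ i, (β i)⁻¹ * σ i * (a i t * p i t) := by
        rw [Finset.mul_sum]; exact Finset.sum_congr rfl fun i _ => by ring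
      have e4 : ∑ i, (β i)⁻¹ * γ i * ((p i t) * (p i t))
          = ∑ i, (β i)⁻¹ * γ i * (p i t) ^ 2 :=
        Finset.sum_congr rfl fun i _ => by ring
      rw [e1, e2, e3, e4]
      ring
    -- E1 : DV expansion
    have E1 : DV t = (∑ i, (2 * q * (a i t * (s i t * (∑ j, Wm i j * (a j t + p j t))))
          + 2 * (1 - q) * (p i t * (s i t * (∑ j, Wm i j * (a j t + p j t))))))
        - 2 * (∑ i, (β i)⁻¹ * (σ i + κ i) * (a i t) ^ 2)
        + 2 * (∑ i, (β i)⁻¹ * σ i * (a i t * p i t))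
        - 2 * (∑ i, (β i)⁻¹ * γ i * (p i t) ^ 2) := by
      simp only [hDV_def]
      rw [Finset.mul_sum Finset.univ (fun i => (β i)⁻¹ * (σ i + κ i) * (a i t) ^ 2) (2:ℝ),
        Finset.mul_sum Finset.univ (fun i => (β i)⁻¹ * σ i * (a i t * p i t)) (2:ℝ),
        Finset.mul_sum Finset.univ (fun i => (β i)⁻¹ * γ i * (p i t) ^ 2) (2:ℝ),
        ← Finset.sum_sub_distrib, ← Finset.sum_add_distrib, ← Finset.sum_sub_distrib]
      refine Finset.sum_congr rfl fun i _ => ?_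
      have hu : (β i)⁻¹ * β i = 1 := inv_mul_cancel₀ (hβ i).ne'
      linear_combination (2 * q * (a i t) * (s i t * (∑ j, Wm i j * (a j t + p j t)))
        + 2 * (1 - q) * (p i t) * (s i t * (∑ j, Wm i j * (a j t + p j t)))) * hu
    -- infection bound
    have hATT : ∑ i, a i t * (∑ j, Wm i j * (a j t + p j t))
        = (∑ i, ∑ j, a i t * Wm i j * a j t) + (∑ i, ∑ j, a i t * Wm i j * p j t) := by
      rw [← Finset.sum_add_distrib]
      refine Finset.sum_congr rfl fun i _ => ?_
      rw [← Finset.sum_add_distrib, Finset.mul_sum]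
      exact Finset.sum_congr rfl fun j _ => by ring
    have hPTT : ∑ i, p i t * (∑ j, Wm i j * (a j t + p j t))
        = (∑ i, ∑ j, p i t * Wm i j * a j t) + (∑ i, ∑ j, p i t * Wm i j * p j t) := by
      rw [← Finset.sum_add_distrib]
      refine Finset.sum_congr rfl fun i _ => ?_
      rw [← Finset.sum_add_distrib, Finset.mul_sum]
      exact Finset.sum_congr rfl fun j _ => by ring
    have hInfle : (∑ i, (2 * q * (a i t * (s i t * (∑ j, Wm i j * (a j t + p j t))))
          + 2 * (1 - q) * (p i t * (s i t * (∑ j, Wm i j * (a j t + p j t))))))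
        ≤ 2 * q * ((∑ i, ∑ j, a i t * Wm i j * a j t) + (∑ i, ∑ j, a i t * Wm i j * p j t))
          + 2 * (1 - q) * ((∑ i, ∑ j, p i t * Wm i j * a j t)
            + (∑ i, ∑ j, p i t * Wm i j * p j t)) := by
      have h1 : (∑ i, (2 * q * (a i t * (s i t * (∑ j, Wm i j * (a j t + p j t))))
          + 2 * (1 - q) * (p i t * (s i t * (∑ j, Wm i j * (a j t + p j t))))))
          ≤ ∑ i, (2 * q * (a i t * (∑ j, Wm i j * (a j t + p j t)))
          + 2 * (1 - q) * (p i t * (∑ j, Wm i j * (a j t + p j t)))) := by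
        refine Finset.sum_le_sum fun i _ => ?_
        have e1 : a i t * (s i t * (∑ j, Wm i j * (a j t + p j t)))
            ≤ a i t * (∑ j, Wm i j * (a j t + p j t)) := by
          nlinarith [mul_nonneg (mul_nonneg (hA i) (hTT i)) (sub_nonneg.mpr (hS1 i))]
        have e2 : p i t * (s i t * (∑ j, Wm i j * (a j t + p j t)))
            ≤ p i t * (∑ j, Wm i j * (a j t + p j t)) := by
          nlinarith [mul_nonneg (mul_nonneg (hP i) (hTT i)) (sub_nonneg.mpr (hS1 i))]
        have e3 := mul_le_mul_of_nonneg_left e1 (by linarith : (0:ℝ) ≤ 2 * q)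
        have e4 := mul_le_mul_of_nonneg_left e2 (by linarith : (0:ℝ) ≤ 2 * (1 - q))
        linarith
      refine le_trans h1 (le_of_eq ?_)
      rw [Finset.sum_add_distrib, ← Finset.mul_sum, ← Finset.mul_sum, hATT, hPTT]
    -- symmetry of cross terms
    have hsym : (∑ i, ∑ j, a i t * Wm i j * p j t) = (∑ i, ∑ j, p i t * Wm i j * a j t) := by
      rw [Finset.sum_comm]
      refine Finset.sum_congr rfl fun i _ => Finset.sum_congr rfl fun j _ => ?_
      rw [hW' i j]
      ring
    -- the quadratic lower bound
    have hq2 := hquad (Sum.elim (fun i => a i t) (fun i => p i t))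
    rw [hyQ] at hq2
    have hsumsq : (∑ k, (Sum.elim (fun i => a i t) (fun i => p i t) k) ^ 2)
        = (∑ i, (a i t) ^ 2) + (∑ i, (p i t) ^ 2) := by
      rw [Fintype.sum_sum_type]
      simp
    rw [hsumsq] at hq2
    -- c * V t ≤ 2 ε (∑ a² + ∑ p²)
    have hcV : c * V t ≤ 2 * ε * ((∑ i, (a i t) ^ 2) + (∑ i, (p i t) ^ 2)) := by
      have h1 : c * V t = ∑ i, c * ((β i)⁻¹ * ((a i t) ^ 2 + (p i t) ^ 2)) := by
        simp only [hV_def]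
        rw [Finset.mul_sum]
      have h2 : ∑ i, c * ((β i)⁻¹ * ((a i t) ^ 2 + (p i t) ^ 2))
          ≤ ∑ i, 2 * ε * ((a i t) ^ 2 + (p i t) ^ 2) := by
        refine Finset.sum_le_sum fun i _ => ?_
        have hbi := hβ i
        have hble : β i₁ ≤ β i := hi₁ i (Finset.mem_univ i)
        have hu : β i₁ * (β i)⁻¹ ≤ 1 := by
          rw [← div_eq_mul_inv]
          exact div_le_one_of_le₀ hble hbi.le
        have hX : (0:ℝ) ≤ (a i t) ^ 2 + (p i t) ^ 2 :=
          add_nonneg (sq_nonneg _) (sq_nonneg _)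
        have hkey2 := mul_nonneg (mul_nonneg (by linarith : (0:ℝ) ≤ 2 * ε) hX)
          (sub_nonneg.mpr hu)
        simp only [hc_def]
        nlinarith [hkey2]
      have h3 : ∑ i, 2 * ε * ((a i t) ^ 2 + (p i t) ^ 2)
          = 2 * ε * ((∑ i, (a i t) ^ 2) + (∑ i, (p i t) ^ 2)) := by
        rw [← Finset.mul_sum, Finset.sum_add_distrib]
      rw [h1]
      rw [h3] at h2
      exact h2
    have hsym2 : q * (∑ i, ∑ j, a i t * Wm i j * p j t)
        = q * (∑ i, ∑ j, p i t * Wm i j * a j t) := by rw [hsym]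
    rw [E1]
    linarith [hInfle, hq2, hcV, hsym, hsym2]
  -- decay of V
  have hVnn : ∀ t : ℝ, 0 ≤ V t := by
    intro t
    apply Finset.sum_nonneg
    intro i _
    have := hβ i
    positivity
  have hVdec : ∀ t : ℝ, 0 ≤ t → V t ≤ V 0 * exp (-(c * t)) := by
    intro t ht
    have hVc : ContinuousOn V (Icc 0 t) :=
      fun u hu => (hVd u hu.1).continuousAt.continuousWithinAt
    have hfc : ContinuousOn (fun u => -(exp (c * u) * V u)) (Icc 0 t) :=
      (((Real.continuous_exp.comp (continuous_const.mul continuous_id)).continuousOn).mul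
        hVc).neg
    have hfd : ∀ u ∈ Ioo (0:ℝ) t, HasDerivAt (fun u => -(exp (c * u) * V u))
        (-((c * exp (c * u)) * V u + exp (c * u) * DV u)) u :=
      fun u hu => ((exp_hasDerivAt c u).mul (hVd u hu.1.le)).neg
    have hf0 : ∀ u ∈ Ioo (0:ℝ) t, 0 ≤ -((c * exp (c * u)) * V u + exp (c * u) * DV u) := by
      intro u hu
      have h1 := hkey u hu.1.le
      have h2 := exp_pos (c * u)
      have h3 : -((c * exp (c * u)) * V u + exp (c * u) * DV u)
          = exp (c * u) * (-(c * V u) - DV u) := by ring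
      rw [h3]
      exact mul_nonneg h2.le (by linarith)
    have h4 := mono_of_deriv hfc hfd hf0 t ⟨ht, le_rfl⟩
    have h5 : exp (c * t) * V t ≤ V 0 := by
      have : -(exp (c * 0) * V 0) ≤ -(exp (c * t) * V t) := h4
      simp only [mul_zero, Real.exp_zero, one_mul] at this
      linarith
    rw [Real.exp_neg]
    rw [mul_comm (V 0), ← div_eq_inv_mul, le_div_iff₀ (exp_pos _)]
    linarith [h5]
  -- conclusion
  intro i
  have hterm : ∀ t : ℝ, 0 ≤ t → (β i)⁻¹ * ((a i t) ^ 2 + (p i t) ^ 2) ≤ V 0 * exp (-(c * t)) := by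
    intro t ht
    refine le_trans ?_ (hVdec t ht)
    apply Finset.single_le_sum (f := fun j => (β j)⁻¹ * ((a j t) ^ 2 + (p j t) ^ 2))
      (fun j _ => by have := hβ j; positivity) (Finset.mem_univ i)
  have hbound : ∀ t : ℝ, 0 ≤ t →
      (a i t) ^ 2 ≤ β i * (V 0 * exp (-(c * t))) ∧
      (p i t) ^ 2 ≤ β i * (V 0 * exp (-(c * t))) := by
    intro t ht
    have h1 := hterm t ht
    have hb := hβ i
    have h2 : (a i t) ^ 2 + (p i t) ^ 2 ≤ β i * (V 0 * exp (-(c * t))) := by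
      have h3 : (a i t) ^ 2 + (p i t) ^ 2 = β i * ((β i)⁻¹ * ((a i t) ^ 2 + (p i t) ^ 2)) := by
        field_simp
      rw [h3]
      exact mul_le_mul_of_nonneg_left h1 hb.le
    constructor
    · nlinarith [sq_nonneg (p i t)]
    · nlinarith [sq_nonneg (a i t)]
  have hexp0 : Tendsto (fun t : ℝ => β i * (V 0 * exp (-(c * t)))) atTop (nhds 0) := by
    have h1 : Tendsto (fun t : ℝ => c * t) atTop atTop :=
      Tendsto.const_mul_atTop hc tendsto_id
    have h2 : Tendsto (fun t : ℝ => -(c * t)) atTop atBot := tendsto_neg_atTop_atBot.comp h1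
    have h3 : Tendsto (fun t : ℝ => exp (-(c * t))) atTop (nhds 0) :=
      Real.tendsto_exp_atBot.comp h2
    have h4 := h3.const_mul (β i * V 0)
    simp only [mul_zero] at h4
    convert h4 using 2 with t
    ring
  have haux : ∀ (f : ℝ → ℝ), (∀ t : ℝ, 0 ≤ t → 0 ≤ f t) →
      (∀ t : ℝ, 0 ≤ t → (f t) ^ 2 ≤ β i * (V 0 * exp (-(c * t)))) →
      Tendsto f atTop (nhds 0) := by
    intro f hf1 hf2
    have hsq : Tendsto (fun t => (f t) ^ 2) atTop (nhds 0) := by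
      apply tendsto_of_tendsto_of_tendsto_of_le_of_le' tendsto_const_nhds hexp0
      · exact Eventually.of_forall fun t => sq_nonneg _
      · exact (eventually_ge_atTop 0).mono fun t ht => hf2 t ht
    have h1 : Tendsto (fun t => Real.sqrt ((f t) ^ 2)) atTop (nhds 0) := by
      have := (Real.continuous_sqrt.tendsto 0).comp hsq
      simpa [Function.comp_def] using this
    apply h1.congr'
    exact (eventually_ge_atTop 0).mono fun t ht => Real.sqrt_sq (hf1 t ht)
  constructor
  · exact haux (a i) (fun t ht => (nonneg t ht i).2.1) (fun t ht => (hbound t ht).1)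
  · exact haux (p i) (fun t ht => (nonneg t ht i).2.2.1) (fun t ht => (hbound t ht).2)
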